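/- arXiv:2212.02889 — 5 statements merged into one kernel-verified Lean document; each statement's English description precedes it below -/
import Mathlib

section
/- Let n ≥ 4 and let M : Fin n → Fin n → ℝ be a symmetric matrix with zero diagonal satisfying the PIC0 condition, i.e. M i k + M j k > 0 for all pairwise distinct indices i, j, k. Then for every nonzero vector h : Fin n → ℝ one has the strict pinching inequality (∑_{i<j} M i j) · (∑_k (h k)²) − 2 · ∑_{i<j} M i j · (h i) · (h j) > 0. (Equivalently, writing R = ∑_{i<j} M i j and Q(h) = ∑_{i<j} M i j · h i · h j for the associated quadratic form, one has 2 Q(h) < R · |h|² for all h ≠ 0.) -/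
open Finset

section Pic0Aux

variable {n : ℕ}

private lemma pic0_w_nonneg (h : Fin n → ℝ) {i j : Fin n} (hij : i ≠ j) :
    0 ≤ (∑ k, h k ^ 2) - 2 * h i * h j := by
  have h1 : h i ^ 2 + h j ^ 2 ≤ ∑ k, h k ^ 2 := by
    have := Finset.sum_le_sum_of_subset_of_nonneg (Finset.subset_univ ({i, j} : Finset (Fin n)))
      (fun k _ _ => sq_nonneg (h k))
    rwa [Finset.sum_pair hij] at this
  nlinarith [sq_nonneg (h i - h j)]

private lemma pic0_claimC (hn : 4 ≤ n) (h : Fin n → ℝ) {i j : Fin n} (hij : i ≠ j) :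
    2 * ((∑ k, h k ^ 2) - 2 * h i * h j) ≤
      ∑ k ∈ Finset.univ \ {i, j},
        (((∑ l, h l ^ 2) - 2 * h k * h i) + ((∑ l, h l ^ 2) - 2 * h k * h j)) := by
  have hsub : ({i, j} : Finset (Fin n)) ⊆ Finset.univ := Finset.subset_univ _
  set σ := ∑ k, h k ^ 2 with hσdef
  set s := Finset.univ \ ({i, j} : Finset (Fin n)) with hs
  have hcardpair : ({i, j} : Finset (Fin n)).card = 2 := Finset.card_pair hij
  have hn2 : 2 ≤ n := by omega
  have hcard : (s.card : ℝ) = (n : ℝ) - 2 := by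
    rw [hs, Finset.card_sdiff_of_subset hsub, hcardpair, Finset.card_univ, Fintype.card_fin,
      Nat.cast_sub hn2]
    norm_num
  have hRHS : ∀ k ∈ s, σ - 2 * h k * h i + (σ - 2 * h k * h j)
      = 2 * σ - (h i + h j) * (2 * h k) := fun k _ => by ring
  rw [Finset.sum_congr rfl hRHS, Finset.sum_sub_distrib, Finset.sum_const, ← Finset.mul_sum,
    nsmul_eq_mul, hcard]
  have hσsplit : σ = h i ^ 2 + h j ^ 2 + ∑ k ∈ s, h k ^ 2 := by
    rw [hσdef, ← Finset.sum_sdiff hsub, Finset.sum_pair hij]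
    ring
  have hcauchy : (∑ k ∈ s, h k) ^ 2 ≤ (s.card : ℝ) * ∑ k ∈ s, h k ^ 2 := by
    exact_mod_cast sq_sum_le_card_mul_sum_sq (s := s) (f := h)
  rw [hcard] at hcauchy
  have hρ : (0:ℝ) ≤ ∑ k ∈ s, h k ^ 2 := Finset.sum_nonneg fun k _ => sq_nonneg _
  have hn4 : (4:ℝ) ≤ (n:ℝ) := by exact_mod_cast hn
  have h2sum : ∑ k ∈ s, 2 * h k = 2 * ∑ k ∈ s, h k := by
    rw [Finset.mul_sum]
  rw [h2sum]
  nlinarith [sq_nonneg (2 * (h i + h j) - ∑ k ∈ s, h k),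
    mul_nonneg (by linarith : (0:ℝ) ≤ (n:ℝ) - 4) (add_nonneg (sq_nonneg (h i)) (sq_nonneg (h j))),
    mul_nonneg (by linarith : (0:ℝ) ≤ 3 * (n:ℝ) - 10) hρ]

private lemma pic0_colsum (M : Fin n → Fin n → ℝ)
    (hPIC0 : ∀ i j k : Fin n, i ≠ j → i ≠ k → j ≠ k → 0 < M i k + M j k)
    {k j : Fin n} (hkj : k ≠ j) :
    (∑ i ∈ Finset.univ \ {k, j}, max (-(M i j)) 0) ≤ max (M k j) 0 ∧
      (0 < M k j → (∑ i ∈ Finset.univ \ {k, j}, max (-(M i j)) 0) < M k j) := by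
  set s := Finset.univ \ ({k, j} : Finset (Fin n)) with hs
  have hmem : ∀ i, i ∈ s ↔ (i ≠ k ∧ i ≠ j) := by
    intro i; simp [hs]
  by_cases hex : ∃ i₀ ∈ s, M i₀ j < 0
  · obtain ⟨i₀, hi₀s, hi₀⟩ := hex
    obtain ⟨hi₀k, hi₀j⟩ := (hmem i₀).1 hi₀s
    have hsum : (∑ i ∈ s, max (-(M i j)) 0) = max (-(M i₀ j)) 0 := by
      refine Finset.sum_eq_single_of_mem i₀ hi₀s ?_
      intro i his hne
      obtain ⟨hik, hij⟩ := (hmem i).1 his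
      have := hPIC0 i i₀ j hne hij hi₀j
      have : 0 < M i j := by linarith
      simp [max_eq_right (by linarith : -(M i j) ≤ 0)]
    have hlt : -(M i₀ j) < M k j := by
      have := hPIC0 k i₀ j (fun e => hi₀k e.symm) hkj hi₀j
      linarith
    have hmax : max (-(M i₀ j)) 0 = -(M i₀ j) := max_eq_left (by linarith)
    constructor
    · rw [hsum, hmax]; exact hlt.le.trans (le_max_left _ _)
    · intro _; rw [hsum, hmax]; exact hlt
  · push_neg at hex
    have hsum : (∑ i ∈ s, max (-(M i j)) 0) = 0 := by
      refine Finset.sum_eq_zero fun i his => ?_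
      exact max_eq_right (by linarith [hex i his])
    rw [hsum]
    exact ⟨le_max_right _ _, fun hp => hp⟩

private lemma pic0_sum3_rot (t : Fin n → Fin n → Fin n → ℝ) :
    ∑ i, ∑ j, ∑ k, t i j k = ∑ k, ∑ j, ∑ i, t i j k :=
  calc ∑ i, ∑ j, ∑ k, t i j k
      = ∑ i, ∑ k, ∑ j, t i j k := Finset.sum_congr rfl (fun _ _ => Finset.sum_comm)
    _ = ∑ k, ∑ i, ∑ j, t i j k := Finset.sum_comm
    _ = ∑ k, ∑ j, ∑ i, t i j k := Finset.sum_congr rfl (fun _ _ => Finset.sum_comm)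

private lemma pic0_triple_eq (f : Fin n → Fin n → Fin n → ℝ) :
    ∑ p ∈ Finset.univ.filter (fun p : Fin n × Fin n => p.1 ≠ p.2),
        ∑ k ∈ Finset.univ \ {p.1, p.2}, f p.1 p.2 k
      = ∑ i, ∑ j, ∑ k, if i ≠ j ∧ k ≠ i ∧ k ≠ j then f i j k else 0 := by
  rw [Finset.sum_filter, Fintype.sum_prod_type]
  refine Finset.sum_congr rfl fun i _ => Finset.sum_congr rfl fun j _ => ?_
  by_cases hij : i = j
  · simp [hij]
  · have hset : Finset.univ \ ({i, j} : Finset (Fin n))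
        = Finset.univ.filter (fun k => k ≠ i ∧ k ≠ j) := by
      ext k; simp [not_or]
    simp only [hij, if_pos, hset, Finset.sum_filter, ne_eq, not_false_iff]
    refine Finset.sum_congr rfl fun k _ => ?_
    simp [hij]

private lemma pic0_sum_chain (m w : Fin n → Fin n → ℝ) (hm : ∀ i j, m i j = m j i) :
    ∑ p ∈ Finset.univ.filter (fun p : Fin n × Fin n => p.1 ≠ p.2),
        ∑ k ∈ Finset.univ \ {p.1, p.2}, m p.1 p.2 * (w k p.1 + w k p.2)
      = 2 * ∑ p ∈ Finset.univ.filter (fun p : Fin n × Fin n => p.1 ≠ p.2),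
          (∑ i ∈ Finset.univ \ {p.1, p.2}, m i p.2) * w p.1 p.2 := by
  have hC : ∑ p ∈ Finset.univ.filter (fun p : Fin n × Fin n => p.1 ≠ p.2),
      (∑ i ∈ Finset.univ \ {p.1, p.2}, m i p.2) * w p.1 p.2
      = ∑ a, ∑ b, ∑ c, if a ≠ b ∧ c ≠ a ∧ c ≠ b then m c b * w a b else 0 := by
    rw [← pic0_triple_eq (fun a b c => m c b * w a b)]
    exact Finset.sum_congr rfl fun p _ => by rw [Finset.sum_mul]
  have hL : ∑ p ∈ Finset.univ.filter (fun p : Fin n × Fin n => p.1 ≠ p.2),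
      ∑ k ∈ Finset.univ \ {p.1, p.2}, m p.1 p.2 * (w k p.1 + w k p.2)
      = (∑ i, ∑ j, ∑ k, if i ≠ j ∧ k ≠ i ∧ k ≠ j then m i j * w k i else 0)
        + ∑ i, ∑ j, ∑ k, if i ≠ j ∧ k ≠ i ∧ k ≠ j then m i j * w k j else 0 := by
    rw [pic0_triple_eq (fun i j k => m i j * (w k i + w k j)), ← Finset.sum_add_distrib]
    refine Finset.sum_congr rfl fun i _ => ?_
    rw [← Finset.sum_add_distrib]
    refine Finset.sum_congr rfl fun j _ => ?_
    rw [← Finset.sum_add_distrib]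
    refine Finset.sum_congr rfl fun k _ => ?_
    split_ifs <;> ring
  have hS12 : (∑ i, ∑ j, ∑ k, if i ≠ j ∧ k ≠ i ∧ k ≠ j then m i j * w k i else 0)
      = ∑ i, ∑ j, ∑ k, if i ≠ j ∧ k ≠ i ∧ k ≠ j then m i j * w k j else 0 := by
    rw [Finset.sum_comm]
    refine Finset.sum_congr rfl fun i _ => Finset.sum_congr rfl fun j _ =>
      Finset.sum_congr rfl fun k _ => ?_
    rw [hm j i]
    exact if_congr (by tauto) rfl rfl
  have hS2C : (∑ i, ∑ j, ∑ k, if i ≠ j ∧ k ≠ i ∧ k ≠ j then m i j * w k j else 0)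
      = ∑ a, ∑ b, ∑ c, if a ≠ b ∧ c ≠ a ∧ c ≠ b then m c b * w a b else 0 := by
    rw [pic0_sum3_rot]
    refine Finset.sum_congr rfl fun k _ => Finset.sum_congr rfl fun j _ =>
      Finset.sum_congr rfl fun i _ => ?_
    exact if_congr (by tauto) rfl rfl
  rw [hL, hS12, hS2C, hC]
  ring

private lemma pic0_double_sum (F : Fin n → Fin n → ℝ) (hF : ∀ i j, F i j = F j i) :
    ∑ p ∈ Finset.univ.filter (fun p : Fin n × Fin n => p.1 ≠ p.2), F p.1 p.2
      = 2 * ∑ p ∈ Finset.univ.filter (fun p : Fin n × Fin n => p.1 < p.2), F p.1 p.2 := by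
  have hpred : Finset.univ.filter (fun p : Fin n × Fin n => p.1 ≠ p.2)
      = Finset.univ.filter (fun p : Fin n × Fin n => p.1 < p.2)
        ∪ Finset.univ.filter (fun p : Fin n × Fin n => p.2 < p.1) := by
    rw [← Finset.filter_or]
    exact Finset.filter_congr fun p _ => by
      constructor
      · exact fun hp => lt_or_gt_of_ne hp
      · rintro (hp | hp)
        · exact ne_of_lt hp
        · exact Ne.symm (ne_of_lt hp)
  have hdisj : Disjoint (Finset.univ.filter (fun p : Fin n × Fin n => p.1 < p.2))
      (Finset.univ.filter (fun p : Fin n × Fin n => p.2 < p.1)) := by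
    rw [Finset.disjoint_left]
    intro p hp1 hp2
    simp only [Finset.mem_filter] at hp1 hp2
    exact absurd hp2.2 (not_lt_of_gt hp1.2)
  rw [hpred, Finset.sum_union hdisj]
  have hswap : ∑ p ∈ Finset.univ.filter (fun p : Fin n × Fin n => p.2 < p.1), F p.1 p.2
      = ∑ p ∈ Finset.univ.filter (fun p : Fin n × Fin n => p.1 < p.2), F p.1 p.2 := by
    refine Finset.sum_nbij' (fun p => p.swap) (fun p => p.swap) ?_ ?_ ?_ ?_ ?_
    · intro p hp; simp only [Finset.mem_filter, Finset.mem_univ, true_and] at hp ⊢; exact hp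
    · intro p hp; simp only [Finset.mem_filter, Finset.mem_univ, true_and] at hp ⊢; exact hp
    · intro p _; exact Prod.swap_swap p
    · intro p _; exact Prod.swap_swap p
    · intro p _; exact hF p.1 p.2
  rw [hswap]; ring

private lemma pic0_w_two_zero (h : Fin n → ℝ) (hσ : 0 < ∑ k, h k ^ 2) {a b j : Fin n}
    (hab : a ≠ b) (haj : a ≠ j) (hbj : b ≠ j) :
    ¬((∑ k, h k ^ 2) - 2 * h a * h j = 0 ∧ (∑ k, h k ^ 2) - 2 * h b * h j = 0) := by
  rintro ⟨ha, hb⟩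
  have hsub : h a ^ 2 + h b ^ 2 + h j ^ 2 ≤ ∑ k, h k ^ 2 := by
    have hins : a ∉ ({b, j} : Finset (Fin n)) := by simp [hab, haj]
    have := Finset.sum_le_sum_of_subset_of_nonneg
      (Finset.subset_univ (insert a ({b, j} : Finset (Fin n))))
      (fun k _ _ => sq_nonneg (h k))
    rwa [Finset.sum_insert hins, Finset.sum_pair hbj, ← add_assoc] at this
  nlinarith [sq_nonneg (h a - h j), sq_nonneg (h b * h j), sq_nonneg (h j), sq_nonneg (h b)]

private lemma pic0_good_pair (hn : 4 ≤ n) (M : Fin n → Fin n → ℝ)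
    (hPIC0 : ∀ i j k : Fin n, i ≠ j → i ≠ k → j ≠ k → 0 < M i k + M j k)
    (h : Fin n → ℝ) (hne : h ≠ 0) :
    ∃ k j : Fin n, k ≠ j ∧ 0 < M k j ∧ 0 < (∑ l, h l ^ 2) - 2 * h k * h j := by
  have hσ : 0 < ∑ k, h k ^ 2 := by
    obtain ⟨t, ht⟩ := Function.ne_iff.mp hne
    exact Finset.sum_pos' (fun k _ => sq_nonneg _)
      ⟨t, Finset.mem_univ t, by rw [pow_two]; exact mul_self_pos.mpr ht⟩
  set j : Fin n := ⟨0, by omega⟩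
  set k₁ : Fin n := ⟨1, by omega⟩
  set k₂ : Fin n := ⟨2, by omega⟩
  set k₃ : Fin n := ⟨3, by omega⟩
  have h12 : k₁ ≠ k₂ := by simp [k₁, k₂, Fin.ext_iff]
  have h13 : k₁ ≠ k₃ := by simp [k₁, k₃, Fin.ext_iff]
  have h23 : k₂ ≠ k₃ := by simp [k₂, k₃, Fin.ext_iff]
  have h1j : k₁ ≠ j := by simp [k₁, j, Fin.ext_iff]
  have h2j : k₂ ≠ j := by simp [k₂, j, Fin.ext_iff]
  have h3j : k₃ ≠ j := by simp [k₃, j, Fin.ext_iff]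
  have hM12 : ¬(M k₁ j ≤ 0 ∧ M k₂ j ≤ 0) := by
    rintro ⟨u, v⟩; have := hPIC0 k₁ k₂ j h12 h1j h2j; linarith
  have hM13 : ¬(M k₁ j ≤ 0 ∧ M k₃ j ≤ 0) := by
    rintro ⟨u, v⟩; have := hPIC0 k₁ k₃ j h13 h1j h3j; linarith
  have hM23 : ¬(M k₂ j ≤ 0 ∧ M k₃ j ≤ 0) := by
    rintro ⟨u, v⟩; have := hPIC0 k₂ k₃ j h23 h2j h3j; linarith
  have hW12 := pic0_w_two_zero h hσ h12 h1j h2j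
  have hW13 := pic0_w_two_zero h hσ h13 h1j h3j
  have hW23 := pic0_w_two_zero h hσ h23 h2j h3j
  have hwpos : ∀ k : Fin n, k ≠ j →
      ((∑ l, h l ^ 2) - 2 * h k * h j ≠ 0 → 0 < (∑ l, h l ^ 2) - 2 * h k * h j) :=
    fun k hkj hz => lt_of_le_of_ne (pic0_w_nonneg h hkj) (Ne.symm hz)
  by_cases hA1 : 0 < M k₁ j
  · by_cases hB1 : (∑ l, h l ^ 2) - 2 * h k₁ * h j = 0
    · by_cases hA2 : 0 < M k₂ j
      · exact ⟨k₂, j, h2j, hA2, hwpos k₂ h2j fun hz => hW12 ⟨hB1, hz⟩⟩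
      · have hA3 : 0 < M k₃ j := by
          rcases not_and_or.mp hM23 with hc | hc
          · exact absurd (not_lt.mp hA2) hc
          · exact lt_of_not_ge hc
        exact ⟨k₃, j, h3j, hA3, hwpos k₃ h3j fun hz => hW13 ⟨hB1, hz⟩⟩
    · exact ⟨k₁, j, h1j, hA1, hwpos k₁ h1j hB1⟩
  · have hA2 : 0 < M k₂ j := by
      rcases not_and_or.mp hM12 with hc | hc
      · exact absurd (not_lt.mp hA1) hc
      · exact lt_of_not_ge hc
    have hA3 : 0 < M k₃ j := by
      rcases not_and_or.mp hM13 with hc | hc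
      · exact absurd (not_lt.mp hA1) hc
      · exact lt_of_not_ge hc
    by_cases hB2 : (∑ l, h l ^ 2) - 2 * h k₂ * h j = 0
    · exact ⟨k₃, j, h3j, hA3, hwpos k₃ h3j fun hz => hW23 ⟨hB2, hz⟩⟩
    · exact ⟨k₂, j, h2j, hA2, hwpos k₂ h2j hB2⟩

end Pic0Aux

/-- For `n ≥ 4` and a symmetric matrix `M : Fin n → Fin n → ℝ` with zero
diagonal satisfying the PIC0 condition (`M i k + M j k > 0` for pairwise distinct
`i, j, k`), every nonzero `h : Fin n → ℝ` satisfies the strict pinching inequality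
`(∑_{i<j} M i j) * (∑ k, (h k)^2) - 2 * ∑_{i<j} M i j * h i * h j > 0`. -/
theorem pic0_implies_pinching (n : ℕ) (hn : 4 ≤ n) (M : Fin n → Fin n → ℝ)
    (hsymm : ∀ i j, M i j = M j i) (hdiag : ∀ i, M i i = 0)
    (hPIC0 : ∀ i j k : Fin n, i ≠ j → i ≠ k → j ≠ k → 0 < M i k + M j k)
    (h : Fin n → ℝ) (hne : h ≠ 0) :
    (∑ p ∈ Finset.univ.filter (fun p : Fin n × Fin n => p.1 < p.2), M p.1 p.2) *
        (∑ k, (h k) ^ 2) -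
      2 * ∑ p ∈ Finset.univ.filter (fun p : Fin n × Fin n => p.1 < p.2),
        M p.1 p.2 * h p.1 * h p.2 > 0 := by
  classical
  set w : Fin n → Fin n → ℝ := fun i j => (∑ k, h k ^ 2) - 2 * h i * h j with hw
  set m : Fin n → Fin n → ℝ := fun i j => max (-(M i j)) 0 with hmdef
  set P : Fin n → Fin n → ℝ := fun i j => max (M i j) 0 with hPdef
  set O : Finset (Fin n × Fin n) :=
    Finset.univ.filter (fun p : Fin n × Fin n => p.1 ≠ p.2) with hO
  -- the target equals the sum over i < j of M i j * w i j
  have e1 : (∑ p ∈ Finset.univ.filter (fun p : Fin n × Fin n => p.1 < p.2), M p.1 p.2) *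
        (∑ k, (h k) ^ 2) -
      2 * ∑ p ∈ Finset.univ.filter (fun p : Fin n × Fin n => p.1 < p.2),
        M p.1 p.2 * h p.1 * h p.2
      = ∑ p ∈ Finset.univ.filter (fun p : Fin n × Fin n => p.1 < p.2),
          M p.1 p.2 * w p.1 p.2 := by
    rw [Finset.sum_mul, Finset.mul_sum, ← Finset.sum_sub_distrib]
    exact Finset.sum_congr rfl fun p _ => by simp only [hw]; ring
  -- main estimate over ordered pairs
  have key : 0 < ∑ p ∈ O, M p.1 p.2 * w p.1 p.2 := by
    have hsplit : ∑ p ∈ O, M p.1 p.2 * w p.1 p.2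
        = ∑ p ∈ O, P p.1 p.2 * w p.1 p.2 - ∑ p ∈ O, m p.1 p.2 * w p.1 p.2 := by
      rw [← Finset.sum_sub_distrib]
      refine Finset.sum_congr rfl fun p _ => ?_
      have : P p.1 p.2 - m p.1 p.2 = M p.1 p.2 := by
        simp only [hPdef, hmdef, max_def]
        split_ifs <;> linarith
      rw [← this]; ring
    have stepA : 2 * ∑ p ∈ O, m p.1 p.2 * w p.1 p.2
        ≤ ∑ p ∈ O, ∑ k ∈ Finset.univ \ {p.1, p.2}, m p.1 p.2 * (w k p.1 + w k p.2) := by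
      rw [Finset.mul_sum]
      refine Finset.sum_le_sum fun p hp => ?_
      have hp12 : p.1 ≠ p.2 := (Finset.mem_filter.mp hp).2
      rw [← Finset.mul_sum]
      have h2 := pic0_claimC hn h hp12
      have hm0 : 0 ≤ m p.1 p.2 := le_max_right _ _
      calc 2 * (m p.1 p.2 * w p.1 p.2) = m p.1 p.2 * (2 * w p.1 p.2) := by ring
        _ ≤ m p.1 p.2 * ∑ k ∈ Finset.univ \ {p.1, p.2}, (w k p.1 + w k p.2) :=
          mul_le_mul_of_nonneg_left h2 hm0
    have hchain := pic0_sum_chain m w (fun i j => by simp only [hmdef, hsymm i j])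
    have hmw_le : ∑ p ∈ O, m p.1 p.2 * w p.1 p.2
        ≤ ∑ p ∈ O, (∑ i ∈ Finset.univ \ {p.1, p.2}, m i p.2) * w p.1 p.2 := by
      rw [hO] at stepA ⊢
      linarith [stepA.trans_eq hchain]
    have hfinal : 0 < ∑ p ∈ O, (P p.1 p.2 - ∑ i ∈ Finset.univ \ {p.1, p.2}, m i p.2)
        * w p.1 p.2 := by
      refine Finset.sum_pos' ?_ ?_
      · intro p hp
        have hp12 : p.1 ≠ p.2 := (Finset.mem_filter.mp hp).2
        have hcol := (pic0_colsum M hPIC0 hp12).1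
        exact mul_nonneg (by simpa only [hPdef, hmdef] using sub_nonneg.mpr hcol)
          (pic0_w_nonneg h hp12)
      · obtain ⟨k₀, j₀, hkj, hMpos, hwpos⟩ := pic0_good_pair hn M hPIC0 h hne
        refine ⟨(k₀, j₀), by simp [hO, hkj], ?_⟩
        have hcol := (pic0_colsum M hPIC0 hkj).2 hMpos
        have hP : P k₀ j₀ = M k₀ j₀ := max_eq_left hMpos.le
        simp only [hPdef, hmdef] at *
        exact mul_pos (by rw [hP] at *; linarith) hwpos
    have hsub2 : ∑ p ∈ O, (P p.1 p.2 - ∑ i ∈ Finset.univ \ {p.1, p.2}, m i p.2) * w p.1 p.2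
        = ∑ p ∈ O, P p.1 p.2 * w p.1 p.2
          - ∑ p ∈ O, (∑ i ∈ Finset.univ \ {p.1, p.2}, m i p.2) * w p.1 p.2 := by
      rw [← Finset.sum_sub_distrib]
      exact Finset.sum_congr rfl fun p _ => by ring
    rw [hsplit]
    rw [hsub2] at hfinal
    linarith
  have hdouble := pic0_double_sum (fun i j => M i j * w i j)
    (fun i j => by simp only [hw, hsymm i j]; ring)
  rw [e1]
  rw [hO] at key
  linarith [key.trans_eq hdouble]
end

section
/- Let n ≥ 4 and let M : Fin n → Fin n → ℝ be a symmetric matrix with zero diagonal satisfying the PIC0 condition, i.e. M i k + M j k > 0 for all pairwise distinct indices i, j, k. Then for any pairwise distinct indices i, j, k, l and any h : Fin n → ℝ, the six-term sum M i j · (h i − h j)² + M i k · (h i − h k)² + M i l · (h i − h l)² + M j k · (h j − h k)² + M j l · (h j − h l)² + M k l · (h k − h l)² is nonnegative. -/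
/-- For `n ≥ 4` and a symmetric matrix `M : Fin n → Fin n → ℝ` with zero
diagonal satisfying the PIC0 condition, for any pairwise distinct indices `i, j, k, l`
and any `h : Fin n → ℝ`, the six-term sum of `M a b * (h a - h b)^2` over the six
unordered pairs in `{i,j,k,l}` is nonnegative. -/
theorem pic0_six_term_nonneg (n : ℕ) (hn : 4 ≤ n) (M : Fin n → Fin n → ℝ)
    (hsymm : ∀ i j, M i j = M j i) (hdiag : ∀ i, M i i = 0)
    (hPIC0 : ∀ i j k : Fin n, i ≠ j → i ≠ k → j ≠ k → 0 < M i k + M j k)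
    (i j k l : Fin n) (hij : i ≠ j) (hik : i ≠ k) (hil : i ≠ l)
    (hjk : j ≠ k) (hjl : j ≠ l) (hkl : k ≠ l) (h : Fin n → ℝ) :
    0 ≤ M i j * (h i - h j) ^ 2 + M i k * (h i - h k) ^ 2 + M i l * (h i - h l) ^ 2 +
        M j k * (h j - h k) ^ 2 + M j l * (h j - h l) ^ 2 + M k l * (h k - h l) ^ 2 := by
  -- Edge names: A = M i j, B = M i k, C = M i l, D = M j k, E = M j l, F = M k l.
  -- Any two adjacent edges (sharing a vertex) have positive sum.
  have hAB : 0 < M i j + M i k := by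
    have := hPIC0 j k i hjk hij.symm hik.symm
    rw [hsymm j i, hsymm k i] at this; linarith
  have hAC : 0 < M i j + M i l := by
    have := hPIC0 j l i hjl hij.symm hil.symm
    rw [hsymm j i, hsymm l i] at this; linarith
  have hBC : 0 < M i k + M i l := by
    have := hPIC0 k l i hkl hik.symm hil.symm
    rw [hsymm k i, hsymm l i] at this; linarith
  have hAD : 0 < M i j + M j k := by
    have := hPIC0 i k j hik hij hjk.symm
    rw [hsymm k j] at this; linarith
  have hAE : 0 < M i j + M j l := by
    have := hPIC0 i l j hil hij hjl.symm
    rw [hsymm l j] at this; linarith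
  have hDE : 0 < M j k + M j l := by
    have := hPIC0 k l j hkl hjk.symm hjl.symm
    rw [hsymm k j, hsymm l j] at this; linarith
  have hBD : 0 < M i k + M j k := hPIC0 i j k hij hik hjk
  have hBF : 0 < M i k + M k l := by
    have := hPIC0 i l k hil hik hkl.symm
    rw [hsymm l k] at this; linarith
  have hDF : 0 < M j k + M k l := by
    have := hPIC0 j l k hjl hjk hkl.symm
    rw [hsymm l k] at this; linarith
  have hCE : 0 < M i l + M j l := hPIC0 i j l hij hil hjl
  have hCF : 0 < M i l + M k l := hPIC0 i k l hik hil hkl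
  have hEF : 0 < M j l + M k l := hPIC0 j k l hjk hjl hkl
  by_cases h1 : M i j < 0 ∨ M k l < 0
  · rcases le_total (M i j) (M k l) with h2 | h2
    · have hAneg : M i j < 0 := by rcases h1 with hx | hx <;> linarith
      linarith [mul_nonneg hAB.le (sq_nonneg (h i - h k)),
        mul_nonneg hAC.le (sq_nonneg (h i - h l)),
        mul_nonneg hAD.le (sq_nonneg (h j - h k)),
        mul_nonneg hAE.le (sq_nonneg (h j - h l)),
        mul_nonneg (by linarith : (0:ℝ) ≤ M k l - M i j) (sq_nonneg (h k - h l)),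
        mul_nonneg (by linarith : (0:ℝ) ≤ -(M i j)) (sq_nonneg (h i + h j - h k - h l))]
    · have hFneg : M k l < 0 := by rcases h1 with hx | hx <;> linarith
      linarith [mul_nonneg hBF.le (sq_nonneg (h i - h k)),
        mul_nonneg hCF.le (sq_nonneg (h i - h l)),
        mul_nonneg hDF.le (sq_nonneg (h j - h k)),
        mul_nonneg hEF.le (sq_nonneg (h j - h l)),
        mul_nonneg (by linarith : (0:ℝ) ≤ M i j - M k l) (sq_nonneg (h i - h j)),
        mul_nonneg (by linarith : (0:ℝ) ≤ -(M k l)) (sq_nonneg (h i + h j - h k - h l))]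
  · push_neg at h1
    by_cases h3 : M i k < 0 ∨ M j l < 0
    · rcases le_total (M i k) (M j l) with h4 | h4
      · have hBneg : M i k < 0 := by rcases h3 with hx | hx <;> linarith
        linarith [mul_nonneg hAB.le (sq_nonneg (h i - h j)),
          mul_nonneg hBC.le (sq_nonneg (h i - h l)),
          mul_nonneg hBD.le (sq_nonneg (h j - h k)),
          mul_nonneg hBF.le (sq_nonneg (h k - h l)),
          mul_nonneg (by linarith : (0:ℝ) ≤ M j l - M i k) (sq_nonneg (h j - h l)),
          mul_nonneg (by linarith : (0:ℝ) ≤ -(M i k)) (sq_nonneg (h i + h k - h j - h l))]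
      · have hEneg : M j l < 0 := by rcases h3 with hx | hx <;> linarith
        linarith [mul_nonneg hAE.le (sq_nonneg (h i - h j)),
          mul_nonneg hCE.le (sq_nonneg (h i - h l)),
          mul_nonneg hDE.le (sq_nonneg (h j - h k)),
          mul_nonneg hEF.le (sq_nonneg (h k - h l)),
          mul_nonneg (by linarith : (0:ℝ) ≤ M i k - M j l) (sq_nonneg (h i - h k)),
          mul_nonneg (by linarith : (0:ℝ) ≤ -(M j l)) (sq_nonneg (h i + h k - h j - h l))]
    · push_neg at h3
      by_cases h5 : M i l < 0 ∨ M j k < 0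
      · rcases le_total (M i l) (M j k) with h6 | h6
        · have hCneg : M i l < 0 := by rcases h5 with hx | hx <;> linarith
          linarith [mul_nonneg hAC.le (sq_nonneg (h i - h j)),
            mul_nonneg hBC.le (sq_nonneg (h i - h k)),
            mul_nonneg hCE.le (sq_nonneg (h j - h l)),
            mul_nonneg hCF.le (sq_nonneg (h k - h l)),
            mul_nonneg (by linarith : (0:ℝ) ≤ M j k - M i l) (sq_nonneg (h j - h k)),
            mul_nonneg (by linarith : (0:ℝ) ≤ -(M i l)) (sq_nonneg (h i + h l - h j - h k))]
        · have hDneg : M j k < 0 := by rcases h5 with hx | hx <;> linarith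
          linarith [mul_nonneg hAD.le (sq_nonneg (h i - h j)),
            mul_nonneg hBD.le (sq_nonneg (h i - h k)),
            mul_nonneg hDE.le (sq_nonneg (h j - h l)),
            mul_nonneg hDF.le (sq_nonneg (h k - h l)),
            mul_nonneg (by linarith : (0:ℝ) ≤ M i l - M j k) (sq_nonneg (h i - h l)),
            mul_nonneg (by linarith : (0:ℝ) ≤ -(M j k)) (sq_nonneg (h i + h l - h j - h k))]
      · push_neg at h5
        have s1 := mul_nonneg h1.1 (sq_nonneg (h i - h j))
        have s2 := mul_nonneg h3.1 (sq_nonneg (h i - h k))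
        have s3 := mul_nonneg h5.1 (sq_nonneg (h i - h l))
        have s4 := mul_nonneg h5.2 (sq_nonneg (h j - h k))
        have s5 := mul_nonneg h3.2 (sq_nonneg (h j - h l))
        have s6 := mul_nonneg h1.2 (sq_nonneg (h k - h l))
        linarith
end

section
/- Let n ≥ 4 and let M : Fin n → Fin n → ℝ be a symmetric matrix with zero diagonal satisfying the PIC0 condition, i.e. M i k + M j k > 0 for all pairwise distinct indices i, j, k. Then for every fixed index i, the sum of M j k over all unordered pairs {j,k} of distinct indices with j ≠ i and k ≠ i is strictly positive: ∑_{j<k, j≠i, k≠i} M j k > 0. -/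
/-- Auxiliary: if all pairwise sums of `f` on `s` are positive and `s` has at least
two elements, then the sum of `f` over `s` is positive. -/
lemma aux_sum_pos {α : Type*} [DecidableEq α] (s : Finset α) (f : α → ℝ)
    (h2 : 2 ≤ s.card) (h : ∀ p ∈ s, ∀ q ∈ s, p ≠ q → 0 < f p + f q) :
    0 < ∑ x ∈ s, f x := by
  have key : ∑ p ∈ s, ∑ q ∈ s.erase p, (f p + f q)
      = (2 * (s.card : ℝ) - 2) * ∑ x ∈ s, f x := by
    have : ∀ p ∈ s, ∑ q ∈ s.erase p, (f p + f q)
        = ((s.card : ℝ) - 1) * f p + (∑ x ∈ s, f x - f p) := by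
      intro p hp
      rw [Finset.sum_add_distrib, Finset.sum_const, Finset.card_erase_of_mem hp,
        Finset.sum_erase_eq_sub hp, nsmul_eq_mul]
      have : 1 ≤ s.card := le_trans (by norm_num) h2
      push_cast [Nat.cast_sub this]
      ring
    rw [Finset.sum_congr rfl this, Finset.sum_add_distrib, Finset.sum_sub_distrib,
      ← Finset.mul_sum, Finset.sum_const, nsmul_eq_mul]
    ring
  have hpos : 0 < ∑ p ∈ s, ∑ q ∈ s.erase p, (f p + f q) := by
    apply Finset.sum_pos
    · intro p hp
      apply Finset.sum_pos
      · intro q hq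
        exact h p hp q (Finset.mem_of_mem_erase hq) (Finset.ne_of_mem_erase hq).symm
      · rw [← Finset.card_pos, Finset.card_erase_of_mem hp]
        omega
    · exact Finset.card_pos.mp (by omega)
  have hc : (0 : ℝ) < 2 * (s.card : ℝ) - 2 := by
    have : (2 : ℝ) ≤ (s.card : ℝ) := by exact_mod_cast h2
    linarith
  nlinarith [key ▸ hpos]

/-- For `n ≥ 4` and a symmetric matrix `M : Fin n → Fin n → ℝ` with zero
diagonal satisfying the PIC0 condition, for every fixed index `i` the sum of `M j k`
over unordered pairs `{j,k}` of distinct indices avoiding `i` is strictly positive. -/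
theorem pic0_pair_sum_avoiding_index_pos (n : ℕ) (hn : 4 ≤ n) (M : Fin n → Fin n → ℝ)
    (hsymm : ∀ i j, M i j = M j i) (hdiag : ∀ i, M i i = 0)
    (hPIC0 : ∀ i j k : Fin n, i ≠ j → i ≠ k → j ≠ k → 0 < M i k + M j k)
    (i : Fin n) :
    0 < ∑ p ∈ Finset.univ.filter
        (fun p : Fin n × Fin n => p.1 < p.2 ∧ p.1 ≠ i ∧ p.2 ≠ i), M p.1 p.2 := by
  classical
  set P := ∑ p ∈ Finset.univ.filter
      (fun p : Fin n × Fin n => p.1 < p.2 ∧ p.1 ≠ i ∧ p.2 ≠ i), M p.1 p.2 with hP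
  -- the sum over reversed pairs equals P
  have hswap : ∑ p ∈ Finset.univ.filter
      (fun p : Fin n × Fin n => p.2 < p.1 ∧ p.1 ≠ i ∧ p.2 ≠ i), M p.1 p.2 = P := by
    rw [hP]
    apply Finset.sum_nbij' (fun p => p.swap) (fun p => p.swap)
    · intro a ha
      simp only [Finset.mem_filter, Finset.mem_univ, true_and] at ha ⊢
      exact ⟨ha.1, ha.2.2, ha.2.1⟩
    · intro a ha
      simp only [Finset.mem_filter, Finset.mem_univ, true_and] at ha ⊢
      exact ⟨ha.1, ha.2.2, ha.2.1⟩
    · intro a _; rfl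
    · intro a _; rfl
    · intro a _; exact hsymm a.1 a.2
  -- split the ordered sum
  have hsplit : ∑ p ∈ Finset.univ.filter
      (fun p : Fin n × Fin n => p.1 ≠ p.2 ∧ p.1 ≠ i ∧ p.2 ≠ i), M p.1 p.2 = P + P := by
    have hdisj : Disjoint
        (Finset.univ.filter (fun p : Fin n × Fin n => p.1 < p.2 ∧ p.1 ≠ i ∧ p.2 ≠ i))
        (Finset.univ.filter (fun p : Fin n × Fin n => p.2 < p.1 ∧ p.1 ≠ i ∧ p.2 ≠ i)) := by
      rw [Finset.disjoint_filter]
      rintro p _ ⟨h, -⟩ ⟨h', -⟩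
      exact absurd h' (not_lt_of_gt h)
    have hunion : Finset.univ.filter
        (fun p : Fin n × Fin n => p.1 ≠ p.2 ∧ p.1 ≠ i ∧ p.2 ≠ i)
        = Finset.univ.filter (fun p : Fin n × Fin n => p.1 < p.2 ∧ p.1 ≠ i ∧ p.2 ≠ i)
          ∪ Finset.univ.filter (fun p : Fin n × Fin n => p.2 < p.1 ∧ p.1 ≠ i ∧ p.2 ≠ i) := by
      ext p
      simp only [Finset.mem_filter, Finset.mem_union, Finset.mem_univ, true_and]
      constructor
      · rintro ⟨hne, h1, h2⟩
        rcases lt_or_gt_of_ne hne with h | h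
        · exact Or.inl ⟨h, h1, h2⟩
        · exact Or.inr ⟨h, h1, h2⟩
      · rintro (⟨h, h1, h2⟩ | ⟨h, h1, h2⟩)
        · exact ⟨ne_of_lt h, h1, h2⟩
        · exact ⟨ne_of_gt h, h1, h2⟩
    rw [hunion, Finset.sum_union hdisj, hswap, hP]
  -- rewrite the ordered sum as an iterated sum
  have hT : ∑ p ∈ Finset.univ.filter
      (fun p : Fin n × Fin n => p.1 ≠ p.2 ∧ p.1 ≠ i ∧ p.2 ≠ i), M p.1 p.2
      = ∑ k ∈ Finset.univ.filter (fun k : Fin n => k ≠ i),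
          ∑ j ∈ Finset.univ.filter (fun j : Fin n => j ≠ k ∧ j ≠ i), M j k := by
    rw [Finset.sum_filter, Fintype.sum_prod_type]
    simp only [Finset.sum_filter]
    rw [Finset.sum_comm]
    refine Finset.sum_congr rfl fun k _ => ?_
    by_cases hk : k = i
    · subst hk
      rw [if_neg (fun h : k ≠ k => h rfl)]
      apply Finset.sum_eq_zero
      intro j _
      rw [if_neg]
      rintro ⟨-, -, h⟩
      exact h rfl
    · rw [if_pos hk]
      refine Finset.sum_congr rfl fun j _ => ?_
      by_cases hj : j = k
      · rw [if_neg (by rintro ⟨h, -⟩; exact h hj), if_neg (by rintro ⟨h, -⟩; exact h hj)]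
      · by_cases hji : j = i
        · rw [if_neg (by rintro ⟨-, h, -⟩; exact h hji), if_neg (by rintro ⟨-, h⟩; exact h hji)]
        · rw [if_pos ⟨hj, hji, hk⟩, if_pos ⟨hj, hji⟩]
  -- each inner sum is positive
  have hTpos : 0 < ∑ k ∈ Finset.univ.filter (fun k : Fin n => k ≠ i),
      ∑ j ∈ Finset.univ.filter (fun j : Fin n => j ≠ k ∧ j ≠ i), M j k := by
    apply Finset.sum_pos
    · intro k hk
      simp only [Finset.mem_filter, Finset.mem_univ, true_and] at hk
      apply aux_sum_pos
      · have hsub : (Finset.univ.filter (fun j : Fin n => j ≠ k ∧ j ≠ i))ᶜ ⊆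
            ({i, k} : Finset (Fin n)) := by
          intro x hx
          simp only [Finset.mem_compl, Finset.mem_filter, Finset.mem_univ, true_and,
            not_and_or, not_not] at hx
          simp only [Finset.mem_insert, Finset.mem_singleton]
          tauto
        have hcard2 : ({i, k} : Finset (Fin n)).card ≤ 2 :=
          le_trans (Finset.card_insert_le _ _) (by simp)
        have := le_trans (Finset.card_le_card hsub) hcard2
        have hcompl := Finset.card_compl
          (Finset.univ.filter (fun j : Fin n => j ≠ k ∧ j ≠ i))
        simp only [Fintype.card_fin] at hcompl
        omega
      · intro p hp q hq hpq
        simp only [Finset.mem_filter, Finset.mem_univ, true_and] at hp hq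
        exact hPIC0 p q k hpq hp.1 hq.1
    · rw [← Finset.card_pos, Finset.filter_ne', Finset.card_erase_of_mem (Finset.mem_univ i)]
      simp only [Finset.card_univ, Fintype.card_fin]
      omega
  rw [hT] at hsplit
  rw [hsplit] at hTpos
  linarith
end

section
/- Let n ≥ 4 and let M : Fin n → Fin n → ℝ be a symmetric matrix with zero diagonal satisfying the PIC0 condition, i.e. M i k + M j k > 0 for all pairwise distinct indices i, j, k. Then for every nonzero h : Fin n → ℝ one has ∑_{i<j} M i j · (∑_{k ≠ i, k ≠ j} (h k)²) > 0. -/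
open Finset in
lemma rowSum_pos' {n : ℕ} (M : Fin n → Fin n → ℝ)
    (hPIC0 : ∀ i j k : Fin n, i ≠ j → i ≠ k → j ≠ k → 0 < M i k + M j k)
    (T : Finset (Fin n)) (j : Fin n) (hj : j ∉ T) (hcard : 2 ≤ T.card) :
    0 < ∑ i ∈ T, M i j := by
  have h1 : (1:ℕ) ≤ T.card := le_trans (by norm_num) hcard
  have key : ∑ i ∈ T, ∑ i' ∈ T.erase i, (M i j + M i' j)
      = 2 * ((T.card : ℝ) - 1) * ∑ i ∈ T, M i j := by
    have step : ∀ i ∈ T, ∑ i' ∈ T.erase i, (M i j + M i' j)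
        = ((T.card : ℝ) - 1) * M i j + ((∑ i ∈ T, M i j) - M i j) := by
      intro i hi
      rw [Finset.sum_add_distrib, Finset.sum_const, Finset.card_erase_of_mem hi,
        Finset.sum_erase_eq_sub hi, nsmul_eq_mul, Nat.cast_sub h1]
      push_cast
      ring
    rw [Finset.sum_congr rfl step, Finset.sum_add_distrib, ← Finset.mul_sum,
      Finset.sum_sub_distrib, Finset.sum_const, nsmul_eq_mul]
    ring
  have pos : 0 < ∑ i ∈ T, ∑ i' ∈ T.erase i, (M i j + M i' j) := by
    apply Finset.sum_pos
    · intro i hi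
      apply Finset.sum_pos
      · intro i' hi'
        have hii' : i' ≠ i := (Finset.mem_erase.mp hi').1
        exact hPIC0 i i' j (Ne.symm hii') (fun e => hj (e ▸ hi))
          (fun e => hj (e ▸ (Finset.mem_erase.mp hi').2))
      · rw [← Finset.card_pos, Finset.card_erase_of_mem hi]; omega
    · rw [← Finset.card_pos]; omega
  rw [key] at pos
  have hc : (0:ℝ) < 2 * ((T.card : ℝ) - 1) := by
    have : (2:ℝ) ≤ T.card := by exact_mod_cast hcard
    linarith
  by_contra hle
  push_neg at hle
  nlinarith [pos, hc]

open Finset in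
lemma pairSum_pos' {n : ℕ} (hn : 4 ≤ n) (M : Fin n → Fin n → ℝ)
    (hsymm : ∀ i j, M i j = M j i)
    (hPIC0 : ∀ i j k : Fin n, i ≠ j → i ≠ k → j ≠ k → 0 < M i k + M j k)
    (rowpos : ∀ (T : Finset (Fin n)) (j : Fin n), j ∉ T → 2 ≤ T.card → 0 < ∑ i ∈ T, M i j)
    (k : Fin n) :
    0 < ∑ p ∈ Finset.univ.filter
        (fun p : Fin n × Fin n => p.1 < p.2 ∧ p.1 ≠ k ∧ p.2 ≠ k), M p.1 p.2 := by
  set U : Finset (Fin n) := Finset.univ.erase k with hU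
  have hUcard : U.card = n - 1 := by
    rw [hU, Finset.card_erase_of_mem (Finset.mem_univ k), Finset.card_univ, Fintype.card_fin]
  set T := ∑ p ∈ Finset.univ.filter
      (fun p : Fin n × Fin n => p.1 < p.2 ∧ p.1 ≠ k ∧ p.2 ≠ k), M p.1 p.2 with hT
  have e1 : Finset.univ.filter (fun p : Fin n × Fin n => p.1 < p.2 ∧ p.1 ≠ k ∧ p.2 ≠ k)
      = (U ×ˢ U).filter (fun p : Fin n × Fin n => p.1 < p.2) := by
    ext p
    simp [hU, Finset.mem_filter, Finset.mem_product, Finset.mem_erase]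
    tauto
  set Q := (U ×ˢ U).filter (fun p : Fin n × Fin n => p.1 ≠ p.2) with hQ
  have split : ∑ p ∈ Q, M p.1 p.2
      = (∑ p ∈ Q.filter (fun p => p.1 < p.2), M p.1 p.2)
        + ∑ p ∈ Q.filter (fun p => ¬ p.1 < p.2), M p.1 p.2 :=
    (Finset.sum_filter_add_sum_filter_not Q _ _).symm
  have eqlt : Q.filter (fun p : Fin n × Fin n => p.1 < p.2)
      = (U ×ˢ U).filter (fun p : Fin n × Fin n => p.1 < p.2) := by
    rw [hQ, Finset.filter_filter]
    apply Finset.filter_congr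
    intro p _
    constructor
    · exact fun h => h.2
    · exact fun h => ⟨ne_of_lt h, h⟩
  have eqgt : Q.filter (fun p : Fin n × Fin n => ¬ p.1 < p.2)
      = (U ×ˢ U).filter (fun p : Fin n × Fin n => p.2 < p.1) := by
    rw [hQ, Finset.filter_filter]
    apply Finset.filter_congr
    intro p _
    constructor
    · exact fun h => lt_of_le_of_ne (not_lt.mp h.2) (Ne.symm h.1)
    · exact fun h => ⟨Ne.symm (ne_of_lt h), not_lt.mpr (le_of_lt h)⟩
  have swapeq : ∑ p ∈ (U ×ˢ U).filter (fun p : Fin n × Fin n => p.2 < p.1), M p.1 p.2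
      = ∑ p ∈ (U ×ˢ U).filter (fun p : Fin n × Fin n => p.1 < p.2), M p.1 p.2 := by
    apply Finset.sum_nbij' (i := Prod.swap) (j := Prod.swap)
    · intro p hp
      simp only [Finset.mem_filter, Finset.mem_product] at hp ⊢
      exact ⟨⟨hp.1.2, hp.1.1⟩, hp.2⟩
    · intro p hp
      simp only [Finset.mem_filter, Finset.mem_product] at hp ⊢
      exact ⟨⟨hp.1.2, hp.1.1⟩, hp.2⟩
    · intro p _; rfl
    · intro p _; rfl
    · intro p _; exact hsymm p.1 p.2
  have twoT : ∑ p ∈ Q, M p.1 p.2 = 2 * T := by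
    rw [split, eqlt, eqgt, swapeq, hT, e1]; ring
  have rowform : ∑ p ∈ Q, M p.1 p.2 = ∑ y ∈ U, ∑ x ∈ U.erase y, M x y := by
    rw [hQ, Finset.sum_filter, Finset.sum_product]
    rw [Finset.sum_comm]
    apply Finset.sum_congr rfl
    intro y _
    rw [← Finset.sum_filter, Finset.filter_ne' U y]
  have pos : 0 < ∑ p ∈ Q, M p.1 p.2 := by
    rw [rowform]
    apply Finset.sum_pos
    · intro y hy
      apply rowpos
      · simp
      · rw [Finset.card_erase_of_mem hy, hUcard]; omega
    · rw [← Finset.card_pos, hUcard]; omega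
  rw [twoT] at pos
  linarith

/-- For `n ≥ 4` and a symmetric matrix `M : Fin n → Fin n → ℝ` with zero
diagonal satisfying the PIC0 condition, for every nonzero `h : Fin n → ℝ` one has
`∑_{i<j} M i j * (∑_{k ≠ i, k ≠ j} (h k)^2) > 0`. -/
theorem pic0_second_sum_pos (n : ℕ) (hn : 4 ≤ n) (M : Fin n → Fin n → ℝ)
    (hsymm : ∀ i j, M i j = M j i) (hdiag : ∀ i, M i i = 0)
    (hPIC0 : ∀ i j k : Fin n, i ≠ j → i ≠ k → j ≠ k → 0 < M i k + M j k)
    (h : Fin n → ℝ) (hne : h ≠ 0) :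
    0 < ∑ p ∈ Finset.univ.filter (fun p : Fin n × Fin n => p.1 < p.2),
        M p.1 p.2 *
          (∑ k ∈ Finset.univ.filter (fun k : Fin n => k ≠ p.1 ∧ k ≠ p.2), (h k) ^ 2) := by
  have rowpos : ∀ (T : Finset (Fin n)) (j : Fin n), j ∉ T → 2 ≤ T.card →
      0 < ∑ i ∈ T, M i j := fun T j => rowSum_pos' M hPIC0 T j
  set P := Finset.univ.filter (fun p : Fin n × Fin n => p.1 < p.2) with hP
  have step1 : ∑ p ∈ P, M p.1 p.2 *
      (∑ k ∈ Finset.univ.filter (fun k : Fin n => k ≠ p.1 ∧ k ≠ p.2), (h k) ^ 2)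
      = ∑ p ∈ P, ∑ k : Fin n,
          ite (k ≠ p.1 ∧ k ≠ p.2) (M p.1 p.2 * h k ^ 2) 0 := by
    apply Finset.sum_congr rfl
    intro p _
    rw [Finset.sum_filter, Finset.mul_sum]
    simp only [mul_ite, mul_zero]
  have step2 : ∑ p ∈ P, ∑ k : Fin n, ite (k ≠ p.1 ∧ k ≠ p.2) (M p.1 p.2 * h k ^ 2) 0
      = ∑ k : Fin n, ∑ p ∈ P, ite (k ≠ p.1 ∧ k ≠ p.2) (M p.1 p.2 * h k ^ 2) 0 :=
    Finset.sum_comm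
  have step3 : ∀ k : Fin n,
      ∑ p ∈ P, ite (k ≠ p.1 ∧ k ≠ p.2) (M p.1 p.2 * h k ^ 2) 0
      = h k ^ 2 * ∑ p ∈ Finset.univ.filter
          (fun p : Fin n × Fin n => p.1 < p.2 ∧ p.1 ≠ k ∧ p.2 ≠ k), M p.1 p.2 := by
    intro k
    rw [← Finset.sum_filter, hP, Finset.filter_filter]
    have hset : Finset.univ.filter
        (fun p : Fin n × Fin n => p.1 < p.2 ∧ k ≠ p.1 ∧ k ≠ p.2)
        = Finset.univ.filter (fun p : Fin n × Fin n => p.1 < p.2 ∧ p.1 ≠ k ∧ p.2 ≠ k) := by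
      apply Finset.filter_congr
      intro p _
      constructor
      · exact fun hc => ⟨hc.1, Ne.symm hc.2.1, Ne.symm hc.2.2⟩
      · exact fun hc => ⟨hc.1, Ne.symm hc.2.1, Ne.symm hc.2.2⟩
    rw [hset, Finset.mul_sum]
    apply Finset.sum_congr rfl
    intro p _
    ring
  rw [step1, step2, Finset.sum_congr rfl (fun k _ => step3 k)]
  obtain ⟨k0, hk0⟩ : ∃ k, h k ≠ 0 := Function.ne_iff.mp hne
  apply Finset.sum_pos'
  · intro k _
    exact mul_nonneg (sq_nonneg _) (le_of_lt (pairSum_pos' hn M hsymm hPIC0 rowpos k))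
  · refine ⟨k0, Finset.mem_univ _, ?_⟩
    exact mul_pos (lt_of_le_of_ne (sq_nonneg _) (Ne.symm (pow_ne_zero 2 hk0)))
      (pairSum_pos' hn M hsymm hPIC0 rowpos k0)
end

section
/- Let c ≥ 0 be a real number and let h_i, h_j, h_k, h_l, and real numbers a, b, p, q, r, s be given with a ≥ −c, b ≥ −c, and p, q, r, s ≥ c, where a plays the role of M i j, b of M k l, and p, q, r, s of M i k, M i l, M j k, M j l. Then a·(h_i−h_j)² + p·(h_i−h_k)² + q·(h_i−h_l)² + r·(h_j−h_k)² + s·(h_j−h_l)² + b·(h_k−h_l)² ≥ c·(h_i + h_j − h_k − h_l)² ≥ 0, using the algebraic identity (h_i−h_k)² + (h_i−h_l)² + (h_j−h_k)² + (h_j−h_l)² − (h_i−h_j)² − (h_k−h_l)² = (h_i + h_j − h_k − h_l)². -/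
/-- If `c ≥ 0`, `a ≥ -c`, `b ≥ -c`, and `p, q, r, s ≥ c`, then the weighted
six-term sum of squared differences is bounded below by `c * (hi + hj - hk - hl)^2`,
which is nonnegative, using the identity
`(hi-hk)^2 + (hi-hl)^2 + (hj-hk)^2 + (hj-hl)^2 - (hi-hj)^2 - (hk-hl)^2
  = (hi + hj - hk - hl)^2`. -/
theorem weighted_six_term_lower_bound (c a b p q r s hi hj hk hl : ℝ)
    (hc : 0 ≤ c) (ha : -c ≤ a) (hb : -c ≤ b)
    (hp : c ≤ p) (hq : c ≤ q) (hr : c ≤ r) (hs : c ≤ s) :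
    a * (hi - hj) ^ 2 + p * (hi - hk) ^ 2 + q * (hi - hl) ^ 2 +
        r * (hj - hk) ^ 2 + s * (hj - hl) ^ 2 + b * (hk - hl) ^ 2 ≥
      c * (hi + hj - hk - hl) ^ 2 ∧
      c * (hi + hj - hk - hl) ^ 2 ≥ 0 := by
  constructor
  · nlinarith [sq_nonneg (hi - hj), sq_nonneg (hk - hl), sq_nonneg (hi - hk),
      sq_nonneg (hi - hl), sq_nonneg (hj - hk), sq_nonneg (hj - hl),
      mul_nonneg (sub_nonneg.2 hp) (sq_nonneg (hi - hk)),
      mul_nonneg (sub_nonneg.2 hq) (sq_nonneg (hi - hl)),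
      mul_nonneg (sub_nonneg.2 hr) (sq_nonneg (hj - hk)),
      mul_nonneg (sub_nonneg.2 hs) (sq_nonneg (hj - hl)),
      mul_nonneg (by linarith : (0:ℝ) ≤ a + c) (sq_nonneg (hi - hj)),
      mul_nonneg (by linarith : (0:ℝ) ≤ b + c) (sq_nonneg (hk - hl))]
  · positivity
end
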